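/- arXiv:2510.16638 — 5 statements merged into one kernel-verified Lean document; each statement's English description precedes it below -/
import Mathlib

section
/- For any two points x, y, the function x*y : S → K is again a point, i.e. (x*y)(0) = 1 and (x*y)(u+v) = (x*y)(u)·(x*y)(v) for all u, v ∈ S. (This expresses that the root-monoid comultiplication of Theorem 1 is an algebra homomorphism K[S] → K[S] ⊗ K[S], i.e. that the product of two K-points of the root monoid is again a K-point.) -/
open Finset

def pairZ {n : ℕ} (v u : Fin n → ℤ) : ℤ := ∑ i, v i * u i

def InS {n m : ℕ} (q : Fin m → Fin n → ℤ) (u : Fin n → ℤ) : Prop :=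
  ∀ j, 0 ≤ pairZ (q j) u

def IsPoint {n m : ℕ} {K : Type*} [Field K] (q : Fin m → Fin n → ℤ)
    (x : (Fin n → ℤ) → K) : Prop :=
  x 0 = 1 ∧ ∀ u v : Fin n → ℤ, InS q u → InS q v → x (u + v) = x u * x v

def Compatible {n m k : ℕ} (hkm : k ≤ m) (q : Fin m → Fin n → ℤ)
    (e : Fin k → Fin n → ℤ) : Prop :=
  (∀ r s : Fin k, pairZ (q (Fin.castLE hkm s)) (e r) = if r = s then -1 else 0) ∧
  (∀ (r : Fin k) (j : Fin m), k ≤ (j : ℕ) → 0 ≤ pairZ (q j) (e r))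

noncomputable def rmul {n m k : ℕ} {K : Type*} [Field K] (hkm : k ≤ m)
    (q : Fin m → Fin n → ℤ) (e1 e2 : Fin k → Fin n → ℤ)
    (x y : (Fin n → ℤ) → K) : (Fin n → ℤ) → K :=
  fun u =>
    ∑ i ∈ Fintype.piFinset (fun r : Fin k =>
        Finset.range ((pairZ (q (Fin.castLE hkm r)) u).toNat + 1)),
      (∏ r : Fin k, ((pairZ (q (Fin.castLE hkm r)) u).toNat.choose (i r) : K)) *
        x (u + ∑ r : Fin k, (i r : ℤ) • e2 r) *
        y (u + ∑ r : Fin k, (pairZ (q (Fin.castLE hkm r)) u - (i r : ℤ)) • e1 r)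

noncomputable def xtau {n m k : ℕ} (K : Type*) [Field K] (hkm : k ≤ m)
    (q : Fin m → Fin n → ℤ) : (Fin n → ℤ) → K :=
  fun u => if ∀ r : Fin k, pairZ (q (Fin.castLE hkm r)) u = 0 then 1 else 0

set_option linter.unusedVariables false

lemma pairZ_add {n : ℕ} (v u w : Fin n → ℤ) : pairZ v (u + w) = pairZ v u + pairZ v w := by
  simp [pairZ, mul_add, Finset.sum_add_distrib]

lemma pairZ_zero {n : ℕ} (v : Fin n → ℤ) : pairZ v 0 = 0 := by simp [pairZ]

lemma pairZ_smul {n : ℕ} (v : Fin n → ℤ) (c : ℤ) (w : Fin n → ℤ) :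
    pairZ v (c • w) = c * pairZ v w := by
  simp only [pairZ, Pi.smul_apply, smul_eq_mul, Finset.mul_sum]
  exact Finset.sum_congr rfl fun i _ => by ring

lemma pairZ_sum {n k : ℕ} (v : Fin n → ℤ) (f : Fin k → Fin n → ℤ) :
    pairZ v (∑ r, f r) = ∑ r, pairZ v (f r) := by
  simp [pairZ, Finset.mul_sum]
  exact Finset.sum_comm

lemma nat_claim {k : ℕ} (a b i : Fin k → ℕ) :
    ∑ p ∈ ((Fintype.piFinset fun r => range (a r + 1)) ×ˢ
        (Fintype.piFinset fun r => range (b r + 1))).filter (fun p => p.1 + p.2 = i),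
      ∏ r, (a r).choose (p.1 r) * (b r).choose (p.2 r)
    = ∏ r, (a r + b r).choose (i r) := by
  have step1 : ∑ p ∈ ((Fintype.piFinset fun r => range (a r + 1)) ×ˢ
        (Fintype.piFinset fun r => range (b r + 1))).filter (fun p => p.1 + p.2 = i),
      ∏ r, (a r).choose (p.1 r) * (b r).choose (p.2 r)
      = ∑ p ∈ ((Fintype.piFinset fun r => range (i r + 1)) ×ˢ
        (Fintype.piFinset fun r => range (i r + 1))).filter (fun p => p.1 + p.2 = i),
      ∏ r, (a r).choose (p.1 r) * (b r).choose (p.2 r) := by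
    apply Finset.sum_subset
    · intro p hp
      simp only [Finset.mem_filter, Finset.mem_product, Fintype.mem_piFinset, mem_range] at hp ⊢
      refine ⟨⟨fun r => ?_, fun r => ?_⟩, hp.2⟩ <;> have := congrFun hp.2 r <;>
        simp only [Pi.add_apply] at this <;> omega
    · intro p hp hnp
      simp only [Finset.mem_filter, Finset.mem_product, Fintype.mem_piFinset, mem_range] at hp hnp
      have h2 := hp.2
      have : ¬((∀ r, p.1 r < a r + 1) ∧ (∀ r, p.2 r < b r + 1)) := fun hc => hnp ⟨hc, h2⟩
      rcases not_and_or.mp this with h | h <;> push_neg at h <;> obtain ⟨r, hr⟩ := h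
      · exact Finset.prod_eq_zero (Finset.mem_univ r)
          (by simp [Nat.choose_eq_zero_of_lt (show a r < p.1 r by omega)])
      · exact Finset.prod_eq_zero (Finset.mem_univ r)
          (by simp [Nat.choose_eq_zero_of_lt (show b r < p.2 r by omega)])
  rw [step1]
  have step2 : (∏ r, (a r + b r).choose (i r))
      = ∑ t ∈ Fintype.piFinset (fun r => Finset.HasAntidiagonal.antidiagonal (i r)),
          ∏ r, (fun p : ℕ × ℕ => (a r).choose p.1 * (b r).choose p.2) (t r) := by
    rw [← Finset.prod_univ_sum (fun r => Finset.HasAntidiagonal.antidiagonal (i r))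
      (fun r (p : ℕ × ℕ) => (a r).choose p.1 * (b r).choose p.2)]
    exact Finset.prod_congr rfl fun r _ => Nat.add_choose_eq _ _ _
  rw [step2]
  apply Finset.sum_nbij' (i := fun p => fun r => (p.1 r, p.2 r))
    (j := fun (t : Fin k → ℕ × ℕ) => ((fun r => (t r).1), (fun r => (t r).2)))
  · intro p hp
    simp only [Finset.mem_filter, Finset.mem_product, Fintype.mem_piFinset, mem_range] at hp
    simp only [Fintype.mem_piFinset, Finset.HasAntidiagonal.mem_antidiagonal]
    intro r
    have := congrFun hp.2 r
    simpa using this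
  · intro t ht
    have ht' : ∀ r, (t r).1 + (t r).2 = i r := fun r =>
      Finset.HasAntidiagonal.mem_antidiagonal.mp (Fintype.mem_piFinset.mp ht r)
    simp only [Finset.mem_filter, Finset.mem_product, Fintype.mem_piFinset, mem_range]
    refine ⟨⟨?_, ?_⟩, funext fun r => ht' r⟩
    · intro r
      exact Nat.lt_succ_of_le (Nat.le.intro (ht' r))
    · intro r
      exact Nat.lt_succ_of_le (Nat.le.intro (by rw [Nat.add_comm]; exact ht' r))
  · intro p _; rfl
  · intro t _; rfl
  · intro p _; rfl

lemma key_lemma {k : ℕ} {K : Type*} [CommRing K] (a b : Fin k → ℕ) (F : (Fin k → ℕ) → K) :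
    (∑ i ∈ Fintype.piFinset fun r => range (a r + b r + 1),
      (∏ r, ((a r + b r).choose (i r) : K)) * F i)
    = ∑ j ∈ Fintype.piFinset (fun r => range (a r + 1)),
        ∑ l ∈ Fintype.piFinset (fun r => range (b r + 1)),
          ((∏ r, ((a r).choose (j r) : K)) * ∏ r, ((b r).choose (l r) : K)) * F (j + l) := by
  rw [← Finset.sum_product' (s := Fintype.piFinset (fun r => range (a r + 1)))
    (t := Fintype.piFinset (fun r => range (b r + 1)))
    (f := fun j l => ((∏ r, ((a r).choose (j r) : K)) * ∏ r, ((b r).choose (l r) : K)) * F (j + l))]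
  rw [← Finset.sum_fiberwise_of_maps_to (t := Fintype.piFinset fun r => range (a r + b r + 1))
    (g := fun p : (Fin k → ℕ) × (Fin k → ℕ) => p.1 + p.2) ?_]
  · apply Finset.sum_congr rfl
    intro i hi
    have : ∀ p ∈ ((Fintype.piFinset fun r => range (a r + 1)) ×ˢ
          (Fintype.piFinset fun r => range (b r + 1))).filter (fun p => p.1 + p.2 = i),
        ((∏ r, ((a r).choose (p.1 r) : K)) * ∏ r, ((b r).choose (p.2 r) : K)) * F (p.1 + p.2)
        = (∏ r, (((a r).choose (p.1 r) * (b r).choose (p.2 r) : ℕ) : K)) * F i := by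
      intro p hp
      have h2 := (Finset.mem_filter.mp hp).2
      rw [h2, ← Finset.prod_mul_distrib]
      push_cast
      ring
    rw [Finset.sum_congr rfl this, ← Finset.sum_mul, ← Nat.cast_prod]
    congr 1
    rw [← nat_claim a b i]
    push_cast
    rfl
  · intro p hp
    simp only [Finset.mem_product, Fintype.mem_piFinset, mem_range] at hp
    simp only [Fintype.mem_piFinset, mem_range, Pi.add_apply]
    intro r
    have := hp.1 r
    have := hp.2 r
    omega

lemma pairZ_shift {n m k : ℕ} (hkm : k ≤ m) (q : Fin m → Fin n → ℤ)
    (e : Fin k → Fin n → ℤ) (he : Compatible hkm q e) (c : Fin k → ℤ) (s : Fin k) :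
    pairZ (q (Fin.castLE hkm s)) (∑ r, c r • e r) = -(c s) := by
  rw [pairZ_sum]
  simp only [pairZ_smul, he.1, mul_ite, mul_neg_one, mul_zero]
  rw [Finset.sum_ite_eq' Finset.univ s (fun r => -(c r))]
  simp

lemma InS_shift {n m k : ℕ} (hkm : k ≤ m) (q : Fin m → Fin n → ℤ)
    (e : Fin k → Fin n → ℤ) (he : Compatible hkm q e) (u : Fin n → ℤ) (hu : InS q u)
    (c : Fin k → ℤ) (hc0 : ∀ r, 0 ≤ c r)
    (hc : ∀ r, c r ≤ pairZ (q (Fin.castLE hkm r)) u) :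
    InS q (u + ∑ r, c r • e r) := by
  intro j
  rw [pairZ_add]
  by_cases hj : (j : ℕ) < k
  · set s : Fin k := ⟨(j : ℕ), hj⟩ with hs
    have hjs : j = Fin.castLE hkm s := by
      apply Fin.ext; rfl
    rw [hjs, pairZ_shift hkm q e he c s]
    have := hc s
    omega
  · push_neg at hj
    have h1 : 0 ≤ pairZ (q j) (∑ r, c r • e r) := by
      rw [pairZ_sum]
      apply Finset.sum_nonneg
      intro r _
      rw [pairZ_smul]
      exact mul_nonneg (hc0 r) (he.2 r j hj)
    have := hu j
    omega

theorem statement_1 {n m k : ℕ} {K : Type*} [Field K] [CharZero K]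
    (hn : 1 ≤ n) (hk : 1 ≤ k) (hkm : k ≤ m)
    (q : Fin m → Fin n → ℤ) (e1 e2 : Fin k → Fin n → ℤ)
    (he1 : Compatible hkm q e1) (he2 : Compatible hkm q e2)
    (x y : (Fin n → ℤ) → K) (hx : IsPoint q x) (hy : IsPoint q y) :
    IsPoint q (rmul hkm q e1 e2 x y) := by
  obtain ⟨hx0, hxm⟩ := hx
  obtain ⟨hy0, hym⟩ := hy
  constructor
  · -- value at 0
    unfold rmul
    rw [Finset.sum_eq_single (fun _ => 0)]
    · simp [pairZ_zero, hx0, hy0]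
    · intro i hi hne
      exfalso
      apply hne
      funext r
      have := Fintype.mem_piFinset.mp hi r
      simp [pairZ_zero] at this
      exact this
    · intro h
      exfalso
      apply h
      rw [Fintype.mem_piFinset]
      intro r
      simp
  · intro u v hu hv
    have hAB : ∀ r : Fin k, pairZ (q (Fin.castLE hkm r)) (u + v)
        = pairZ (q (Fin.castLE hkm r)) u + pairZ (q (Fin.castLE hkm r)) v :=
      fun r => pairZ_add _ _ _
    have htoN : ∀ r : Fin k,
        (pairZ (q (Fin.castLE hkm r)) u + pairZ (q (Fin.castLE hkm r)) v).toNat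
        = (pairZ (q (Fin.castLE hkm r)) u).toNat + (pairZ (q (Fin.castLE hkm r)) v).toNat := by
      intro r
      have h1 := hu (Fin.castLE hkm r)
      have h2 := hv (Fin.castLE hkm r)
      omega
    have hcastu : ∀ r : Fin k,
        (((pairZ (q (Fin.castLE hkm r)) u).toNat : ℤ)) = pairZ (q (Fin.castLE hkm r)) u :=
      fun r => Int.toNat_of_nonneg (hu _)
    have hcastv : ∀ r : Fin k,
        (((pairZ (q (Fin.castLE hkm r)) v).toNat : ℤ)) = pairZ (q (Fin.castLE hkm r)) v :=
      fun r => Int.toNat_of_nonneg (hv _)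
    show rmul hkm q e1 e2 x y (u + v) = _
    unfold rmul
    simp only [hAB, htoN, mul_assoc]
    rw [key_lemma (fun r => (pairZ (q (Fin.castLE hkm r)) u).toNat)
      (fun r => (pairZ (q (Fin.castLE hkm r)) v).toNat)
      (fun i => x (u + v + ∑ r : Fin k, (i r : ℤ) • e2 r) *
        y (u + v + ∑ r : Fin k,
          (pairZ (q (Fin.castLE hkm r)) u + pairZ (q (Fin.castLE hkm r)) v - (i r : ℤ)) • e1 r))]
    rw [Finset.sum_mul_sum]
    apply Finset.sum_congr rfl
    intro j hj
    apply Finset.sum_congr rfl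
    intro l hl
    have hjr : ∀ r, (j r : ℤ) ≤ pairZ (q (Fin.castLE hkm r)) u := by
      intro r
      have := Fintype.mem_piFinset.mp hj r
      rw [mem_range] at this
      have h2 := hcastu r
      omega
    have hlr : ∀ r, (l r : ℤ) ≤ pairZ (q (Fin.castLE hkm r)) v := by
      intro r
      have := Fintype.mem_piFinset.mp hl r
      rw [mem_range] at this
      have h2 := hcastv r
      omega
    -- InS facts
    have hSxu : InS q (u + ∑ r, ((j r : ℤ)) • e2 r) :=
      InS_shift hkm q e2 he2 u hu _ (fun r => Int.natCast_nonneg _) hjr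
    have hSxv : InS q (v + ∑ r, ((l r : ℤ)) • e2 r) :=
      InS_shift hkm q e2 he2 v hv _ (fun r => Int.natCast_nonneg _) hlr
    have hSyu : InS q (u + ∑ r, (pairZ (q (Fin.castLE hkm r)) u - (j r : ℤ)) • e1 r) :=
      InS_shift hkm q e1 he1 u hu _ (fun r => by have := hjr r; omega)
        (fun r => by have := Int.natCast_nonneg (j r); omega)
    have hSyv : InS q (v + ∑ r, (pairZ (q (Fin.castLE hkm r)) v - (l r : ℤ)) • e1 r) :=
      InS_shift hkm q e1 he1 v hv _ (fun r => by have := hlr r; omega)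
        (fun r => by have := Int.natCast_nonneg (l r); omega)
    -- split the x argument
    have ex2 : u + v + ∑ r : Fin k, (((j + l) r : ℕ) : ℤ) • e2 r
        = (u + ∑ r, ((j r : ℤ)) • e2 r) + (v + ∑ r, ((l r : ℤ)) • e2 r) := by
      have : ∀ r : Fin k, (((j + l) r : ℕ) : ℤ) • e2 r
          = (j r : ℤ) • e2 r + (l r : ℤ) • e2 r := by
        intro r
        rw [Pi.add_apply]
        push_cast
        rw [add_smul]
      rw [Finset.sum_congr rfl (fun r _ => this r), Finset.sum_add_distrib]
      abel
    have ey2 : u + v + ∑ r : Fin k,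
          (pairZ (q (Fin.castLE hkm r)) u + pairZ (q (Fin.castLE hkm r)) v
            - (((j + l) r : ℕ) : ℤ)) • e1 r
        = (u + ∑ r, (pairZ (q (Fin.castLE hkm r)) u - (j r : ℤ)) • e1 r)
          + (v + ∑ r, (pairZ (q (Fin.castLE hkm r)) v - (l r : ℤ)) • e1 r) := by
      have : ∀ r : Fin k, (pairZ (q (Fin.castLE hkm r)) u + pairZ (q (Fin.castLE hkm r)) v
            - (((j + l) r : ℕ) : ℤ)) • e1 r
          = (pairZ (q (Fin.castLE hkm r)) u - (j r : ℤ)) • e1 r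
            + (pairZ (q (Fin.castLE hkm r)) v - (l r : ℤ)) • e1 r := by
        intro r
        rw [← add_smul, Pi.add_apply]
        congr 1
        push_cast
        ring
      rw [Finset.sum_congr rfl (fun r _ => this r), Finset.sum_add_distrib]
      abel
    rw [ex2, ey2, hxm _ _ hSxu hSxv, hym _ _ hSyu hSyv]
    ring
end

section
/- Assume for each r ≤ k there exists u_r ∈ S with ⟨p_s, u_r⟩ = δ_{sr} for all s ≤ k. Then the operation * is commutative (x*y = y*x for all points x, y) if and only if e_1^{(r)} = e_2^{(r)} for all r = 1, …, k. (This is the Remark after Theorem 4.2: a root monoid is commutative if and only if the two Demazure roots in each pair coincide.) -/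
open Finset

lemma pairZ_add_right' {n : ℕ} (w u v : Fin n → ℤ) :
    pairZ w (u + v) = pairZ w u + pairZ w v := by
  simp [pairZ, mul_add, Finset.sum_add_distrib]

lemma rmul_special {n m k : ℕ} {K : Type*} [Field K] (hkm : k ≤ m)
    (q : Fin m → Fin n → ℤ) (e1 e2 : Fin k → Fin n → ℤ)
    (x y : (Fin n → ℤ) → K) (r : Fin k) (u : Fin n → ℤ)
    (hu : ∀ s : Fin k, pairZ (q (Fin.castLE hkm s)) u = if s = r then 1 else 0) :
    rmul hkm q e1 e2 x y u = x u * y (u + e1 r) + x (u + e2 r) * y u := by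
  have hF : Fintype.piFinset (fun s : Fin k =>
        Finset.range ((pairZ (q (Fin.castLE hkm s)) u).toNat + 1)) =
      {(fun _ => 0 : Fin k → ℕ), fun s => if s = r then 1 else 0} := by
    ext i
    simp only [Fintype.mem_piFinset, Finset.mem_range, hu, Finset.mem_insert,
      Finset.mem_singleton]
    constructor
    · intro h
      by_cases hir : i r = 0
      · left; funext s
        have := h s
        by_cases hs : s = r
        · subst hs; exact hir
        · simpa [hs] using Nat.lt_one_iff.mp (by simpa [hs] using this)
      · right; funext s
        have := h s
        by_cases hs : s = r
        · subst hs
          rw [if_pos rfl] at this ⊢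
          rw [Int.toNat_one] at this
          omega
        · simpa [hs] using Nat.lt_one_iff.mp (by simpa [hs] using this)
    · rintro (rfl | rfl) s <;> by_cases hs : s = r <;> simp [hs]
  have hne : (fun _ => 0 : Fin k → ℕ) ≠ fun s => if s = r then 1 else 0 := by
    intro h
    have := congrFun h r
    simp at this
  rw [rmul, hF, Finset.sum_pair hne]
  congr 1
  · have h1 : (∏ s : Fin k, ((pairZ (q (Fin.castLE hkm s)) u).toNat.choose 0 : K)) = 1 := by
      simp
    have h2 : (∑ s : Fin k, ((0:ℕ) : ℤ) • e2 s) = 0 := by simp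
    have h3 : (∑ s : Fin k, (pairZ (q (Fin.castLE hkm s)) u - ((0:ℕ):ℤ)) • e1 s) = e1 r := by
      have key : ∀ s : Fin k, (pairZ (q (Fin.castLE hkm s)) u - ((0:ℕ):ℤ)) • e1 s
          = if s = r then e1 s else 0 := fun s => by
        by_cases hs : s = r <;> simp [hs, hu]
      rw [Finset.sum_congr rfl (fun s _ => key s), Finset.sum_ite_eq' Finset.univ r e1]
      simp
    rw [h1, h2, h3, one_mul, add_zero]
  · have h1 : (∏ s : Fin k,
        ((pairZ (q (Fin.castLE hkm s)) u).toNat.choose (if s = r then 1 else 0) : K)) = 1 := by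
      have key : ∀ s : Fin k,
          ((pairZ (q (Fin.castLE hkm s)) u).toNat.choose (if s = r then 1 else 0) : K)
          = 1 := fun s => by by_cases hs : s = r <;> simp [hs, hu]
      rw [Finset.prod_congr rfl (fun s _ => key s), Finset.prod_const_one]
    have h2 : (∑ s : Fin k, ((if s = r then (1:ℕ) else 0 : ℕ) : ℤ) • e2 s) = e2 r := by
      have key : ∀ s : Fin k, ((if s = r then (1:ℕ) else 0 : ℕ) : ℤ) • e2 s
          = if s = r then e2 s else 0 := fun s => by
        by_cases hs : s = r <;> simp [hs]
      rw [Finset.sum_congr rfl (fun s _ => key s), Finset.sum_ite_eq' Finset.univ r e2]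
      simp
    have h3 : (∑ s : Fin k,
        (pairZ (q (Fin.castLE hkm s)) u - ((if s = r then (1:ℕ) else 0 : ℕ) : ℤ)) • e1 s) = 0 := by
      have key : ∀ s : Fin k,
          (pairZ (q (Fin.castLE hkm s)) u - ((if s = r then (1:ℕ) else 0 : ℕ) : ℤ)) • e1 s
          = 0 := fun s => by by_cases hs : s = r <;> simp [hs, hu]
      rw [Finset.sum_congr rfl (fun s _ => key s), Finset.sum_const_zero]
    rw [h1, h2, h3, one_mul, add_zero]

lemma two_zpow_inj {K : Type*} [Field K] [CharZero K] {a b : ℤ}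
    (h : (2:K) ^ a = (2:K) ^ b) : a = b := by
  have h2 : ((2:ℚ):K) = (2:K) := by norm_num
  have : (((2:ℚ) ^ a : ℚ) : K) = (((2:ℚ) ^ b : ℚ) : K) := by
    rw [Rat.cast_zpow, Rat.cast_zpow, h2, h]
  have hq : (2:ℚ) ^ a = (2:ℚ) ^ b := Rat.cast_injective this
  exact zpow_right_injective₀ (by norm_num) (by norm_num) hq

theorem statement_7 {n m k : ℕ} {K : Type*} [Field K] [CharZero K]
    (hn : 1 ≤ n) (hk : 1 ≤ k) (hkm : k ≤ m)
    (q : Fin m → Fin n → ℤ) (e1 e2 : Fin k → Fin n → ℤ)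
    (he1 : Compatible hkm q e1) (he2 : Compatible hkm q e2)
    (hur : ∀ r : Fin k, ∃ u : Fin n → ℤ, InS q u ∧
      ∀ s : Fin k, pairZ (q (Fin.castLE hkm s)) u = if s = r then 1 else 0) :
    (∀ x y : (Fin n → ℤ) → K, IsPoint q x → IsPoint q y →
      ∀ u : Fin n → ℤ, InS q u →
        rmul hkm q e1 e2 x y u = rmul hkm q e1 e2 y x u) ↔
    (∀ r : Fin k, e1 r = e2 r) := by
  constructor
  · intro h r
    obtain ⟨u, huS, hu⟩ := hur r
    funext i
    set w : Fin n → ℤ := Pi.single i 1 with hw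
    have hpair : ∀ v : Fin n → ℤ, pairZ w v = v i := by
      intro v
      simp [pairZ, hw, Pi.single_apply, ite_mul]
    set x : (Fin n → ℤ) → K := fun _ => 1 with hx
    set y : (Fin n → ℤ) → K := fun v => (2:K) ^ (pairZ w v) with hy
    have hxp : IsPoint q x := ⟨rfl, fun _ _ _ _ => by simp [hx]⟩
    have hyp : IsPoint q y := by
      refine ⟨by simp [hy, pairZ], fun a b _ _ => ?_⟩
      simp only [hy, pairZ_add_right']
      exact zpow_add₀ two_ne_zero _ _
    have := h x y hxp hyp u huS
    rw [rmul_special hkm q e1 e2 x y r u hu, rmul_special hkm q e1 e2 y x r u hu] at this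
    simp only [hx, one_mul, mul_one] at this
    have hyy : y (u + e1 r) = y (u + e2 r) := by
      have h' : y u + y (u + e1 r) = y u + y (u + e2 r) := by
        rw [add_comm (y u) (y (u + e1 r))]; exact this
      exact add_left_cancel h'
    simp only [hy, pairZ_add_right'] at hyy
    have := two_zpow_inj hyy
    have h2 : pairZ w (e1 r) = pairZ w (e2 r) := by omega
    rw [hpair, hpair] at h2
    exact h2
  · intro h x y hx hy u hu
    have hE : e1 = e2 := funext h
    subst hE
    rw [rmul, rmul]
    have hd0 : ∀ s : Fin k, 0 ≤ pairZ (q (Fin.castLE hkm s)) u := fun s => hu (Fin.castLE hkm s)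
    have hcast : ∀ s : Fin k, (((pairZ (q (Fin.castLE hkm s)) u).toNat : ℤ))
        = pairZ (q (Fin.castLE hkm s)) u := fun s => Int.toNat_of_nonneg (hd0 s)
    refine Finset.sum_nbij' (fun a => fun s => (pairZ (q (Fin.castLE hkm s)) u).toNat - a s)
      (fun a => fun s => (pairZ (q (Fin.castLE hkm s)) u).toNat - a s) ?_ ?_ ?_ ?_ ?_
    · intro a ha
      simp only [Fintype.mem_piFinset, Finset.mem_range] at ha ⊢
      intro s; have := ha s; omega
    · intro a ha
      simp only [Fintype.mem_piFinset, Finset.mem_range] at ha ⊢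
      intro s; have := ha s; omega
    · intro a ha
      simp only [Fintype.mem_piFinset, Finset.mem_range] at ha
      funext s; simp only []; have := ha s; omega
    · intro a ha
      simp only [Fintype.mem_piFinset, Finset.mem_range] at ha
      funext s; simp only []; have := ha s; omega
    · intro a ha
      simp only [Fintype.mem_piFinset, Finset.mem_range] at ha
      have ha' : ∀ s, a s ≤ (pairZ (q (Fin.castLE hkm s)) u).toNat :=
        fun s => Nat.lt_succ_iff.mp (ha s)
      have hc1 : ∀ s : Fin k, ((((pairZ (q (Fin.castLE hkm s)) u).toNat - a s : ℕ)) : ℤ)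
          = pairZ (q (Fin.castLE hkm s)) u - (a s : ℤ) := by
        intro s
        have h1 := hcast s
        have h2 := ha' s
        omega
      have hch : (∏ s : Fin k, ((pairZ (q (Fin.castLE hkm s)) u).toNat.choose
            ((pairZ (q (Fin.castLE hkm s)) u).toNat - a s) : K))
          = ∏ s : Fin k, ((pairZ (q (Fin.castLE hkm s)) u).toNat.choose (a s) : K) := by
        refine Finset.prod_congr rfl fun s _ => ?_
        rw [Nat.choose_symm (ha' s)]
      have hs1 : (∑ s : Fin k, ((((pairZ (q (Fin.castLE hkm s)) u).toNat - a s : ℕ)) : ℤ) • e1 s)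
          = ∑ s : Fin k, (pairZ (q (Fin.castLE hkm s)) u - (a s : ℤ)) • e1 s := by
        refine Finset.sum_congr rfl fun s _ => ?_
        rw [hc1 s]
      have hs2 : (∑ s : Fin k, (pairZ (q (Fin.castLE hkm s)) u
            - ((((pairZ (q (Fin.castLE hkm s)) u).toNat - a s : ℕ)) : ℤ)) • e1 s)
          = ∑ s : Fin k, ((a s : ℤ)) • e1 s := by
        refine Finset.sum_congr rfl fun s _ => ?_
        rw [hc1 s]; ring_nf
      simp only []
      rw [hch, hs1, hs2]
      ring
end

section
/- Let K be a field of characteristic zero and let L be a Lie algebra over K which is a free K-module with basis e_1, …, e_k. Let χ_1, …, χ_k ∈ ℤ^m be vectors that are linearly independent over ℚ. Suppose that for every t = (t_1, …, t_m) ∈ (Kˣ)^m the K-linear automorphism A_t of L determined by A_t(e_i) = (∏_{j=1}^m t_j^{(χ_i)_j}) · e_i preserves the Lie bracket, i.e. A_t[x, y] = [A_t x, A_t y] for all x, y ∈ L. Then L is abelian: [x, y] = 0 for all x, y ∈ L. (This is the Lie-algebra core of Lemma 5.2: the unipotent radical of an active semidirect product U ⋊ T is commutative, so U ≅ 𝔾_a^k.)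 -/
open Finset

theorem statement_8 {K : Type*} [Field K] [CharZero K] {k m : ℕ}
    {L : Type*} [LieRing L] [LieAlgebra K L]
    (b : Module.Basis (Fin k) K L)
    (χ : Fin k → Fin m → ℤ)
    (hχ : LinearIndependent ℚ fun i : Fin k => fun j : Fin m => ((χ i j : ℚ)))
    (h : ∀ (t : Fin m → Kˣ) (A : L →ₗ[K] L),
      (∀ i : Fin k, A (b i) = (∏ j : Fin m, ((t j : K) ^ (χ i j))) • b i) →
      ∀ x y : L, A ⁅x, y⁆ = ⁅A x, A y⁆) :
    ∀ x y : L, ⁅x, y⁆ = 0 := by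
  -- injectivity of n ↦ 2^n in K
  have h2 : ∀ a b' : ℤ, (2:K)^a = (2:K)^b' → a = b' := by
    intro a b' hab
    have hcast : (((2:ℚ)^a : ℚ) : K) = (((2:ℚ)^b' : ℚ) : K) := by
      push_cast
      exact hab
    have h3 : (2:ℚ)^a = (2:ℚ)^b' := Rat.cast_injective hcast
    exact zpow_right_injective₀ (by norm_num) (by norm_num) h3
  have key : ∀ i j : Fin k, ⁅b i, b j⁆ = (0 : L) := by
    intro i j
    have hb : ∀ l : Fin k, b.repr ⁅b i, b j⁆ l = 0 := by
      intro l
      -- χ l ≠ χ i + χ j somewhere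
      have hne : ∃ s : Fin m, χ l s ≠ χ i s + χ j s := by
        by_contra hc
        push_neg at hc
        have hli := Fintype.linearIndependent_iff.mp hχ
        set g : Fin k → ℚ := fun a =>
          (if a = l then 1 else 0) - (if a = i then 1 else 0) - (if a = j then 1 else 0)
          with hg
        have hsum : ∑ a, g a • (fun s : Fin m => (χ a s : ℚ)) = 0 := by
          funext s
          have : ∑ a, g a * (χ a s : ℚ) = 0 := by
            simp only [hg, sub_mul, Finset.sum_sub_distrib, ite_mul, one_mul, zero_mul,
              Finset.sum_ite_eq', Finset.mem_univ, if_true]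
            have := hc s
            push_cast [this]
            ring
          simpa using this
        have hz := hli g hsum
        have hs0 : ∑ a, g a = 0 := Finset.sum_eq_zero fun a _ => hz a
        have hs1 : ∑ a, g a = -1 := by
          simp [hg, Finset.sum_sub_distrib]
        rw [hs0] at hs1
        norm_num at hs1
      obtain ⟨s0, hs0⟩ := hne
      -- choose the torus element
      set t : Fin m → Kˣ := fun s => if s = s0 then Units.mk0 (2:K) two_ne_zero else 1 with ht
      set P : Fin k → K := fun a => ∏ s, ((t s : K) ^ (χ a s)) with hPdef
      have hP' : ∀ a, (∏ s : Fin m, ((t s : K) ^ (χ a s))) = P a := fun a => rfl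
      have hP : ∀ a, P a = (2:K) ^ (χ a s0) := by
        intro a
        rw [← hP' a]
        rw [Finset.prod_eq_single s0]
        · simp [ht]
        · intro s _ hss
          simp [ht, hss]
        · intro hs; exact absurd (Finset.mem_univ s0) hs
      set A : L →ₗ[K] L := b.constr K (fun a => P a • b a) with hA
      have hAb : ∀ a : Fin k, A (b a) = (∏ s : Fin m, ((t s : K) ^ (χ a s))) • b a := by
        intro a
        rw [hA, Module.Basis.constr_basis, hPdef]
      have heq := h t A hAb (b i) (b j)
      -- compute both sides' repr at l
      have hrhs : ⁅A (b i), A (b j)⁆ = (P i * P j) • ⁅b i, b j⁆ := by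
        rw [hAb i, hAb j, hP' i, hP' j, smul_lie, lie_smul, smul_smul]
      have hlhs : A ⁅b i, b j⁆ = ∑ a, (P a * b.repr ⁅b i, b j⁆ a) • b a := by
        conv_lhs => rw [← b.sum_repr ⁅b i, b j⁆]
        rw [map_sum]
        refine Finset.sum_congr rfl fun a _ => ?_
        rw [map_smul, hAb a, hP' a, smul_smul, mul_comm]
      have hrepr : P l * b.repr ⁅b i, b j⁆ l = (P i * P j) * b.repr ⁅b i, b j⁆ l := by
        have := congrArg (fun z => b.repr z l) (hlhs ▸ hrhs ▸ heq)
        simpa [map_sum, Finsupp.single_apply, Module.Basis.repr_self,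
          Finset.sum_ite_eq', Finset.mem_univ] using this
      have hPne : P l ≠ P i * P j := by
        rw [hP, hP, hP, ← zpow_add₀ (two_ne_zero (α := K))]
        intro hcontra
        exact hs0 (h2 _ _ hcontra)
      by_contra hcl
      exact hPne (mul_right_cancel₀ hcl hrepr)
    apply b.repr.injective
    ext l
    simp [hb l]
  intro x y
  have had : ⁅x, y⁆ = LieAlgebra.ad K L x y := rfl
  rw [had, ← b.sum_repr x, ← b.sum_repr y]
  simp only [map_sum, map_smul, LinearMap.sum_apply, LinearMap.smul_apply,
    LieAlgebra.ad_apply, key, smul_zero, Finset.sum_const_zero]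
end

section
/- Let x be a point such that x(u) ≠ 0 implies ⟨p_r, u⟩ = 0 for all r ≤ k (the support of x is contained in τ^⊥, i.e. x lies in the closure of the orbit of the torus fixed-point locus corresponding to faces γ ⊇ τ). Then x*x = x if and only if x(u) ∈ {0, 1} for all u ∈ S. (This is the point-level content of case (1) of Theorem 7.1: for a face γ of σ with τ ⊆ γ, the set of idempotents in the torus orbit O_γ is exactly {x_γ}.) -/
open Finset

lemma pairZ_add_sum {n k : ℕ} (v u : Fin n → ℤ) (c : Fin k → ℤ) (e : Fin k → Fin n → ℤ) :
    pairZ v (u + ∑ r, c r • e r) = pairZ v u + ∑ r, c r * pairZ v (e r) := by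
  rw [pairZ_add]
  congr 1
  simp only [pairZ, Finset.mul_sum, Finset.sum_apply, Pi.smul_apply, smul_eq_mul]
  rw [Finset.sum_comm]
  congr 1; ext r; congr 1; ext i; ring

lemma rmul_key {n m k : ℕ} {K : Type*} [Field K] (hkm : k ≤ m)
    (q : Fin m → Fin n → ℤ) (e1 e2 : Fin k → Fin n → ℤ)
    (he1 : Compatible hkm q e1) (he2 : Compatible hkm q e2)
    (x : (Fin n → ℤ) → K)
    (hsupp : ∀ u : Fin n → ℤ, InS q u → x u ≠ 0 →
      ∀ r : Fin k, pairZ (q (Fin.castLE hkm r)) u = 0)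
    (u : Fin n → ℤ) (hu : InS q u) :
    rmul hkm q e1 e2 x x u =
      if (∀ r : Fin k, pairZ (q (Fin.castLE hkm r)) u = 0) then x u * x u else 0 := by
  have hP : ∀ r : Fin k, 0 ≤ pairZ (q (Fin.castLE hkm r)) u := fun r => hu _
  have htn : ∀ r : Fin k,
      ((pairZ (q (Fin.castLE hkm r)) u).toNat : ℤ) = pairZ (q (Fin.castLE hkm r)) u :=
    fun r => Int.toNat_of_nonneg (hP r)
  by_cases hz : ∀ r : Fin k, pairZ (q (Fin.castLE hkm r)) u = 0
  · rw [if_pos hz]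
    have hset : Fintype.piFinset (fun r : Fin k =>
        Finset.range ((pairZ (q (Fin.castLE hkm r)) u).toNat + 1)) = {fun _ => 0} := by
      ext i
      simp [Fintype.mem_piFinset, hz, Nat.lt_one_iff, funext_iff]
    rw [rmul, hset, Finset.sum_singleton]
    simp [hz]
  · rw [if_neg hz]
    apply Finset.sum_eq_zero
    intro i hi
    have hib : ∀ r : Fin k, (i r : ℤ) ≤ pairZ (q (Fin.castLE hkm r)) u := by
      intro r
      have h1 := Fintype.mem_piFinset.mp hi r
      rw [Finset.mem_range, Nat.lt_succ_iff] at h1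
      calc (i r : ℤ) ≤ ((pairZ (q (Fin.castLE hkm r)) u).toNat : ℤ) := by exact_mod_cast h1
        _ = _ := htn r
    set A := u + ∑ r : Fin k, (i r : ℤ) • e2 r with hA
    set B := u + ∑ r : Fin k, (pairZ (q (Fin.castLE hkm r)) u - (i r : ℤ)) • e1 r with hB
    have hpA : ∀ s : Fin k, pairZ (q (Fin.castLE hkm s)) A
        = pairZ (q (Fin.castLE hkm s)) u - i s := by
      intro s
      rw [hA, pairZ_add_sum]
      simp [he2.1, mul_ite, Finset.sum_ite_eq', sub_eq_add_neg]
    have hpB : ∀ s : Fin k, pairZ (q (Fin.castLE hkm s)) B = i s := by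
      intro s
      rw [hB, pairZ_add_sum]
      simp [he1.1, mul_ite, Finset.sum_ite_eq']
    have hAS : InS q A := by
      intro j
      rcases lt_or_ge (j : ℕ) k with hj | hj
      · have hcj : Fin.castLE hkm ⟨(j : ℕ), hj⟩ = j := by ext; simp
        rw [← hcj, hpA ⟨(j : ℕ), hj⟩]
        have := hib ⟨(j : ℕ), hj⟩
        linarith
      · rw [hA, pairZ_add_sum]
        exact add_nonneg (hu j) (Finset.sum_nonneg fun r _ =>
          mul_nonneg (Int.natCast_nonneg _) (he2.2 r j hj))
    have hBS : InS q B := by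
      intro j
      rcases lt_or_ge (j : ℕ) k with hj | hj
      · have hcj : Fin.castLE hkm ⟨(j : ℕ), hj⟩ = j := by ext; simp
        rw [← hcj, hpB ⟨(j : ℕ), hj⟩]
        exact Int.natCast_nonneg _
      · rw [hB, pairZ_add_sum]
        refine add_nonneg (hu j) (Finset.sum_nonneg fun r _ =>
          mul_nonneg ?_ (he1.2 r j hj))
        have := hib r
        linarith
    obtain ⟨r0, hr0⟩ := not_forall.mp hz
    rcases eq_or_ne (x A) 0 with hxA | hxA
    · rw [hxA]; ring
    rcases eq_or_ne (x B) 0 with hxB | hxB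
    · rw [hxB]; ring
    exfalso
    have h1 := hsupp A hAS hxA r0
    have h2 := hsupp B hBS hxB r0
    rw [hpA r0] at h1
    rw [hpB r0] at h2
    apply hr0
    omega

theorem statement_12 {n m k : ℕ} {K : Type*} [Field K] [CharZero K]
    (hn : 1 ≤ n) (hk : 1 ≤ k) (hkm : k ≤ m)
    (q : Fin m → Fin n → ℤ) (e1 e2 : Fin k → Fin n → ℤ)
    (he1 : Compatible hkm q e1) (he2 : Compatible hkm q e2)
    (x : (Fin n → ℤ) → K) (hx : IsPoint q x)
    (hsupp : ∀ u : Fin n → ℤ, InS q u → x u ≠ 0 →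
      ∀ r : Fin k, pairZ (q (Fin.castLE hkm r)) u = 0) :
    (∀ u : Fin n → ℤ, InS q u → rmul hkm q e1 e2 x x u = x u) ↔
    (∀ u : Fin n → ℤ, InS q u → x u = 0 ∨ x u = 1) := by
  constructor
  · intro h u hu
    have hkey := rmul_key hkm q e1 e2 he1 he2 x hsupp u hu
    rw [h u hu] at hkey
    by_cases hz : ∀ r : Fin k, pairZ (q (Fin.castLE hkm r)) u = 0
    · rw [if_pos hz] at hkey
      have : x u * (x u - 1) = 0 := by rw [mul_sub, mul_one, ← hkey]; ring
      rcases mul_eq_zero.mp this with h' | h'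
      · exact Or.inl h'
      · exact Or.inr (sub_eq_zero.mp h')
    · rw [if_neg hz] at hkey
      exact Or.inl hkey
  · intro h u hu
    rw [rmul_key hkm q e1 e2 he1 he2 x hsupp u hu]
    by_cases hz : ∀ r : Fin k, pairZ (q (Fin.castLE hkm r)) u = 0
    · rw [if_pos hz]
      rcases h u hu with h' | h' <;> rw [h'] <;> ring
    · rw [if_neg hz]
      by_contra hne
      obtain ⟨r0, hr0⟩ := not_forall.mp hz
      exact hr0 (hsupp u hu (fun h0 => hne h0.symm) r0)
end

section
/- Fix 0 ≤ s ≤ k and a subset J ⊆ {1, …, m} with J ∩ {1, …, s} = ∅ and {s+1, …, k} ⊆ J (the indices of the ray generators of a face γ of σ with p_1, …, p_s ∉ γ and p_{s+1}, …, p_k ∈ γ). Assume for each r = 1, …, s: ⟨q_j, e_2^{(r)}⟩ = 0 for all j ∈ J (e_2^{(r)} ∈ γ^⊥), and there exists j ∈ J with ⟨q_j, e_1^{(r)}⟩ > 0 (e_1^{(r)} ∉ γ^⊥). Let x be a point such that for all u ∈ S: x(u) ≠ 0 if and only if ⟨q_j, u⟩ = 0 for all j ∈ J (x lies in the torus orbit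 O_γ). Then x*x = x if and only if x(u) = 1 for every u ∈ S with ⟨q_j, u⟩ = 0 for all j ∈ J ∪ {1, …, k}. (This is case (3) of Theorem 7.1: E_γ = O_γ ∩ {χ^u = 1 for all u ∈ cone(τ, γ)^⊥ ∩ S_σ}.) -/
open Finset

lemma pairZ_expand {n k : ℕ} (v u : Fin n → ℤ) (a : Fin k → ℤ) (e : Fin k → Fin n → ℤ) :
    pairZ v (u + ∑ r, a r • e r) = pairZ v u + ∑ r, a r * pairZ v (e r) := by
  simp only [pairZ, Pi.add_apply, Finset.sum_apply, Pi.smul_apply, smul_eq_mul, mul_add,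
    Finset.sum_add_distrib, Finset.mul_sum]
  congr 1
  rw [Finset.sum_comm]
  exact Finset.sum_congr rfl fun r _ => Finset.sum_congr rfl fun i _ => by ring

lemma pairZ_expand_lt {n m k : ℕ} (hkm : k ≤ m) (q : Fin m → Fin n → ℤ)
    {e : Fin k → Fin n → ℤ} (he : Compatible hkm q e) (u : Fin n → ℤ)
    (a : Fin k → ℤ) (r'' : Fin k) :
    pairZ (q (Fin.castLE hkm r'')) (u + ∑ r, a r • e r) =
      pairZ (q (Fin.castLE hkm r'')) u - a r'' := by
  rw [pairZ_expand]
  simp [he.1, mul_ite]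
  ring

theorem statement_14 {n m k : ℕ} {K : Type*} [Field K] [CharZero K]
    (hn : 1 ≤ n) (hk : 1 ≤ k) (hkm : k ≤ m)
    (q : Fin m → Fin n → ℤ) (e1 e2 : Fin k → Fin n → ℤ)
    (he1 : Compatible hkm q e1) (he2 : Compatible hkm q e2)
    (s : ℕ) (hs : s ≤ k) (J : Finset (Fin m))
    (hJs : ∀ j ∈ J, ¬ (j : ℕ) < s)
    (hJk : ∀ j : Fin m, s ≤ (j : ℕ) → (j : ℕ) < k → j ∈ J)
    (hrt2 : ∀ r : Fin k, (r : ℕ) < s → ∀ j ∈ J, pairZ (q j) (e2 r) = 0)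
    (hrt1 : ∀ r : Fin k, (r : ℕ) < s → ∃ j ∈ J, 0 < pairZ (q j) (e1 r))
    (x : (Fin n → ℤ) → K) (hx : IsPoint q x)
    (horb : ∀ u : Fin n → ℤ, InS q u → (x u ≠ 0 ↔ ∀ j ∈ J, pairZ (q j) u = 0)) :
    (∀ u : Fin n → ℤ, InS q u → rmul hkm q e1 e2 x x u = x u) ↔
    (∀ u : Fin n → ℤ, InS q u →
      (∀ j : Fin m, (j ∈ J ∨ (j : ℕ) < k) → pairZ (q j) u = 0) → x u = 1) := by
  constructor
  · -- forward direction
    intro h u hu hzero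
    have hc : ∀ r : Fin k, pairZ (q (Fin.castLE hkm r)) u = 0 := fun r =>
      hzero _ (Or.inr (by simp [Fin.lt_iff_val_lt_val, r.isLt]))
    have h1 : rmul hkm q e1 e2 x x u = x u * x u := by
      unfold rmul
      rw [Finset.sum_eq_single_of_mem (fun _ => 0)]
      · simp [hc]
      · simp
      · intro b hb hne
        exfalso
        apply hne
        funext r
        have := Fintype.mem_piFinset.mp hb r
        simp [hc] at this
        simp [this]
    have hxu : x u ≠ 0 := (horb u hu).mpr fun j hj => hzero j (Or.inl hj)
    have := h u hu
    rw [h1] at this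
    calc x u = x u * x u * (x u)⁻¹ := by field_simp
    _ = x u * (x u)⁻¹ := by rw [this]
    _ = 1 := by field_simp
  · -- backward direction
    intro h u hu
    -- common facts
    have harg1S : ∀ i : Fin k → ℕ, (∀ r, (i r : ℤ) ≤ pairZ (q (Fin.castLE hkm r)) u) →
        InS q (u + ∑ r, (i r : ℤ) • e2 r) := by
      intro i hi j
      rcases lt_or_ge (j : ℕ) k with hj | hj
      · have hj' : Fin.castLE hkm ⟨(j : ℕ), hj⟩ = j := Fin.ext rfl
        rw [← hj', pairZ_expand_lt hkm q he2]
        have h1 := hi ⟨(j : ℕ), hj⟩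
        have h2 : 0 ≤ (i ⟨(j : ℕ), hj⟩ : ℤ) := Int.ofNat_nonneg _
        linarith
      · rw [pairZ_expand]
        have : 0 ≤ ∑ r, (i r : ℤ) * pairZ (q j) (e2 r) :=
          Finset.sum_nonneg fun r _ => mul_nonneg (Int.ofNat_nonneg _) (he2.2 r j hj)
        linarith [hu j]
    have harg2S : ∀ i : Fin k → ℕ, (∀ r, (i r : ℤ) ≤ pairZ (q (Fin.castLE hkm r)) u) →
        InS q (u + ∑ r, (pairZ (q (Fin.castLE hkm r)) u - (i r : ℤ)) • e1 r) := by
      intro i hi j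
      rcases lt_or_ge (j : ℕ) k with hj | hj
      · have hj' : Fin.castLE hkm ⟨(j : ℕ), hj⟩ = j := Fin.ext rfl
        rw [← hj', pairZ_expand_lt hkm q he1]
        have h2 : 0 ≤ (i ⟨(j : ℕ), hj⟩ : ℤ) := Int.ofNat_nonneg _
        linarith
      · rw [pairZ_expand]
        have : 0 ≤ ∑ r, (pairZ (q (Fin.castLE hkm r)) u - (i r : ℤ)) * pairZ (q j) (e1 r) :=
          Finset.sum_nonneg fun r _ => mul_nonneg (by linarith [hi r]) (he1.2 r j hj)
        linarith [hu j]
    have hmemle : ∀ i : Fin k → ℕ, i ∈ Fintype.piFinset (fun r : Fin k =>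
          Finset.range ((pairZ (q (Fin.castLE hkm r)) u).toNat + 1)) →
        ∀ r, (i r : ℤ) ≤ pairZ (q (Fin.castLE hkm r)) u := by
      intro i hi r
      have := Fintype.mem_piFinset.mp hi r
      rw [Finset.mem_range, Nat.lt_succ_iff] at this
      calc (i r : ℤ) ≤ ((pairZ (q (Fin.castLE hkm r)) u).toNat : ℤ) := Int.ofNat_le.mpr this
      _ = _ := Int.toNat_of_nonneg (hu _)
    by_cases hB : ∀ j ∈ J, pairZ (q j) u = 0
    · -- case B
      have fB : ∀ r : Fin k, s ≤ (r : ℕ) → pairZ (q (Fin.castLE hkm r)) u = 0 := by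
        intro r hr
        exact hB _ (hJk (Fin.castLE hkm r) (by simpa using hr) (by simpa using r.isLt))
      set i₀ : Fin k → ℕ := fun r => (pairZ (q (Fin.castLE hkm r)) u).toNat with hi₀def
      have hi₀ : ∀ r, (i₀ r : ℤ) = pairZ (q (Fin.castLE hkm r)) u := fun r =>
        Int.toNat_of_nonneg (hu _)
      have hmem : i₀ ∈ Fintype.piFinset (fun r : Fin k =>
          Finset.range ((pairZ (q (Fin.castLE hkm r)) u).toNat + 1)) := by
        simp [Fintype.mem_piFinset, Nat.lt_succ_iff, hi₀def]
      have hvanish : ∀ b ∈ Fintype.piFinset (fun r : Fin k =>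
          Finset.range ((pairZ (q (Fin.castLE hkm r)) u).toNat + 1)), b ≠ i₀ →
          (∏ r : Fin k, ((pairZ (q (Fin.castLE hkm r)) u).toNat.choose (b r) : K)) *
          x (u + ∑ r : Fin k, (b r : ℤ) • e2 r) *
          x (u + ∑ r : Fin k, (pairZ (q (Fin.castLE hkm r)) u - (b r : ℤ)) • e1 r) = 0 := by
        intro b hb hne
        have hble := hmemle b hb
        obtain ⟨r, hr⟩ : ∃ r, b r ≠ i₀ r := by
          by_contra h'
          push_neg at h'
          exact hne (funext h')
        have hrs : (r : ℕ) < s := by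
          by_contra hrs
          push_neg at hrs
          have h0 := fB r hrs
          have h1 := hble r
          rw [h0] at h1
          have h2 : b r = 0 := by exact_mod_cast Nat.le_zero.mp (by exact_mod_cast h1)
          apply hr
          rw [h2, hi₀def]
          simp [h0]
        have hblt : (b r : ℤ) < pairZ (q (Fin.castLE hkm r)) u := by
          rcases lt_or_eq_of_le (hble r) with h' | h'
          · exact h'
          · exfalso; apply hr; rw [hi₀def]; simp [← h']
        obtain ⟨j, hjJ, hjpos⟩ := hrt1 r hrs
        have hterm : 0 < pairZ (q j)
            (u + ∑ r' : Fin k, (pairZ (q (Fin.castLE hkm r')) u - (b r' : ℤ)) • e1 r') := by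
          rw [pairZ_expand, hB j hjJ, zero_add]
          have hnonneg : ∀ r' ∈ (univ : Finset (Fin k)), 0 ≤
              (pairZ (q (Fin.castLE hkm r')) u - (b r' : ℤ)) * pairZ (q j) (e1 r') := by
            intro r' _
            rcases lt_or_ge (j : ℕ) k with hjk | hjk
            · have hj' : Fin.castLE hkm ⟨(j : ℕ), hjk⟩ = j := Fin.ext rfl
              rcases eq_or_ne r' (⟨(j : ℕ), hjk⟩ : Fin k) with hrr | hrr
              · have hcr0 : pairZ (q (Fin.castLE hkm r')) u = 0 := by
                  apply fB
                  rw [hrr]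
                  simpa using Nat.le_of_not_lt (hJs j hjJ)
                have hbr0 : (b r' : ℤ) = 0 := le_antisymm (hcr0 ▸ hble r') (Int.ofNat_nonneg _)
                rw [hcr0, hbr0]
                simp
              · have : pairZ (q j) (e1 r') = 0 := by
                  rw [← hj', he1.1]
                  simp [hrr]
                rw [this, mul_zero]
            · exact mul_nonneg (by linarith [hble r']) (he1.2 r' j hjk)
          have hle := Finset.single_le_sum hnonneg (Finset.mem_univ r)
          have : 0 < (pairZ (q (Fin.castLE hkm r)) u - (b r : ℤ)) * pairZ (q j) (e1 r) :=
            mul_pos (by linarith) hjpos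
          linarith
        have hx2 : x (u + ∑ r' : Fin k,
            (pairZ (q (Fin.castLE hkm r')) u - (b r' : ℤ)) • e1 r') = 0 := by
          by_contra h0
          have := (horb _ (harg2S b hble)).mp h0 j hjJ
          omega
        rw [hx2, mul_zero]
      unfold rmul
      rw [Finset.sum_eq_single_of_mem i₀ hmem hvanish]
      have harg2 : (∑ r : Fin k, (pairZ (q (Fin.castLE hkm r)) u - (i₀ r : ℤ)) • e1 r) = 0 := by
        apply Finset.sum_eq_zero
        intro r _
        rw [hi₀ r, sub_self, zero_smul]
      have hchoose : (∏ r : Fin k, ((pairZ (q (Fin.castLE hkm r)) u).toNat.choose (i₀ r) : K)) = 1 := by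
        apply Finset.prod_eq_one
        intro r _
        rw [hi₀def]
        simp
      have hwS : InS q (u + ∑ r, (i₀ r : ℤ) • e2 r) :=
        harg1S i₀ fun r => le_of_eq (hi₀ r)
      have hwzero : ∀ j : Fin m, (j ∈ J ∨ (j : ℕ) < k) →
          pairZ (q j) (u + ∑ r, (i₀ r : ℤ) • e2 r) = 0 := by
        intro j hj
        rcases hj with hjJ | hjk
        · rw [pairZ_expand, hB j hjJ, zero_add]
          apply Finset.sum_eq_zero
          intro r _
          rcases lt_or_ge (r : ℕ) s with hrs | hrs
          · rw [hrt2 r hrs j hjJ, mul_zero]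
          · have : i₀ r = 0 := by rw [hi₀def]; simp [fB r hrs]
            rw [this]
            simp
        · have hj' : Fin.castLE hkm ⟨(j : ℕ), hjk⟩ = j := Fin.ext rfl
          rw [← hj', pairZ_expand_lt hkm q he2, hi₀, sub_self]
      have hxw : x (u + ∑ r, (i₀ r : ℤ) • e2 r) = 1 := h _ hwS hwzero
      rw [harg2, add_zero, hchoose, hxw, one_mul, one_mul]
    · -- case A
      push_neg at hB
      obtain ⟨j0, hj0J, hj0⟩ := hB
      have hj0pos : 0 < pairZ (q j0) u := lt_of_le_of_ne (hu j0) (Ne.symm hj0)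
      have hxu : x u = 0 := by
        by_contra h0
        exact hj0 ((horb u hu).mp h0 j0 hj0J)
      rw [hxu]
      unfold rmul
      apply Finset.sum_eq_zero
      intro i hi
      have hile := hmemle i hi
      rcases lt_or_ge (j0 : ℕ) k with hjk | hjk
      · have hj' : Fin.castLE hkm ⟨(j0 : ℕ), hjk⟩ = j0 := Fin.ext rfl
        rcases Nat.eq_zero_or_pos (i ⟨(j0 : ℕ), hjk⟩) with h0 | h0
        · have hp1 : 0 < pairZ (q j0) (u + ∑ r, (i r : ℤ) • e2 r) := by
            rw [← hj', pairZ_expand_lt hkm q he2, h0]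
            rw [hj']
            simpa using hj0pos
          have hx1 : x (u + ∑ r, (i r : ℤ) • e2 r) = 0 := by
            by_contra hh
            have := (horb _ (harg1S i hile)).mp hh j0 hj0J
            omega
          rw [hx1, mul_zero, zero_mul]
        · have hp2 : 0 < pairZ (q j0)
              (u + ∑ r, (pairZ (q (Fin.castLE hkm r)) u - (i r : ℤ)) • e1 r) := by
            rw [← hj', pairZ_expand_lt hkm q he1]
            have : pairZ (q (Fin.castLE hkm ⟨(j0 : ℕ), hjk⟩)) u -
                (pairZ (q (Fin.castLE hkm ⟨(j0 : ℕ), hjk⟩)) u - (i ⟨(j0 : ℕ), hjk⟩ : ℤ)) =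
                (i ⟨(j0 : ℕ), hjk⟩ : ℤ) := by ring
            rw [this]
            exact_mod_cast h0
          have hx2 : x (u + ∑ r, (pairZ (q (Fin.castLE hkm r)) u - (i r : ℤ)) • e1 r) = 0 := by
            by_contra hh
            have := (horb _ (harg2S i hile)).mp hh j0 hj0J
            omega
          rw [hx2, mul_zero]
      · have hp1 : 0 < pairZ (q j0) (u + ∑ r, (i r : ℤ) • e2 r) := by
          rw [pairZ_expand]
          have : 0 ≤ ∑ r, (i r : ℤ) * pairZ (q j0) (e2 r) :=
            Finset.sum_nonneg fun r _ => mul_nonneg (Int.ofNat_nonneg _) (he2.2 r j0 hjk)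
          linarith
        have hx1 : x (u + ∑ r, (i r : ℤ) • e2 r) = 0 := by
          by_contra hh
          have := (horb _ (harg1S i hile)).mp hh j0 hj0J
          omega
        rw [hx1, mul_zero, zero_mul]
end
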